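/- Let A be an n×n column-stochastic matrix and b ∈ ℝ^n with b ≥ 0 componentwise. Then the set S = {x ∈ ℝ^n : 0 ≤ x ≤ b and A x = x} is nonempty and contains a greatest element x*, i.e., an element x* ∈ S such that x ≤ x* componentwise for every x ∈ S. -/

import Mathlib

/-- For a column-stochastic matrix `A` and a componentwise-nonnegative
vector `b`, the set `S = {x : 0 ≤ x ≤ b ∧ A x = x}` is nonempty and
contains a greatest element. -/
theorem column_stochastic_greatest_constrained_fixed_point {n : ℕ}
    (A : Matrix (Fin n) (Fin n) ℝ)
    (hnonneg : ∀ i j, 0 ≤ A i j)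
    (hcol : ∀ j, ∑ i, A i j = 1)
    (b : Fin n → ℝ) (hb : 0 ≤ b) :
    ∃ xstar : Fin n → ℝ,
      (0 ≤ xstar ∧ xstar ≤ b ∧ A.mulVec xstar = xstar) ∧
      ∀ x : Fin n → ℝ, 0 ≤ x → x ≤ b → A.mulVec x = x → x ≤ xstar := by
  classical
  set S : Set (Fin n → ℝ) := {x | 0 ≤ x ∧ x ≤ b ∧ A.mulVec x = x} with hSdef
  have h0S : (0 : Fin n → ℝ) ∈ S := ⟨le_refl _, hb, by simp⟩
  -- monotonicity of mulVec
  have hmono : ∀ x y : Fin n → ℝ, x ≤ y → A.mulVec x ≤ A.mulVec y := by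
    intro x y hxy i
    simp only [Matrix.mulVec, dotProduct]
    exact Finset.sum_le_sum fun j _ => mul_le_mul_of_nonneg_left (hxy j) (hnonneg i j)
  -- sums preserved
  have hsum : ∀ x : Fin n → ℝ, ∑ i, A.mulVec x i = ∑ i, x i := by
    intro x
    simp only [Matrix.mulVec, dotProduct]
    rw [Finset.sum_comm]
    refine Finset.sum_congr rfl fun j _ => ?_
    rw [← Finset.sum_mul, hcol j, one_mul]
  -- S is closed under pointwise sup
  have hsup : ∀ x ∈ S, ∀ y ∈ S, x ⊔ y ∈ S := by
    intro x hx y hy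
    set z := x ⊔ y with hz
    have hz0 : (0 : Fin n → ℝ) ≤ z := le_sup_of_le_left hx.1
    have hzb : z ≤ b := sup_le hx.2.1 hy.2.1
    have h1 : x ≤ A.mulVec z := hx.2.2 ▸ hmono x z le_sup_left
    have h2 : y ≤ A.mulVec z := hy.2.2 ▸ hmono y z le_sup_right
    have hge : z ≤ A.mulVec z := sup_le h1 h2
    have hsumeq : ∑ i, (A.mulVec z i - z i) = 0 := by
      rw [Finset.sum_sub_distrib, hsum z, sub_self]
    have hzero : ∀ i ∈ Finset.univ, A.mulVec z i - z i = 0 :=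
      (Finset.sum_eq_zero_iff_of_nonneg
        (fun i _ => sub_nonneg.2 (hge i))).1 hsumeq
    refine ⟨hz0, hzb, funext fun i => ?_⟩
    have := hzero i (Finset.mem_univ i)
    linarith
  -- S is compact
  have hcont : Continuous fun x : Fin n → ℝ => A.mulVec x :=
    LinearMap.continuous_of_finiteDimensional (Matrix.mulVecLin A)
  have hSeq : S = Set.Icc 0 b ∩ {x | A.mulVec x = x} := by
    ext x
    simp [hSdef, Set.mem_Icc, and_assoc]
  have hSclosed : IsClosed S := by
    rw [hSeq]
    exact isClosed_Icc.inter (isClosed_eq hcont continuous_id)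
  have hScompact : IsCompact S := by
    refine (isCompact_Icc (a := (0 : Fin n → ℝ)) (b := b)).of_isClosed_subset hSclosed ?_
    intro x hx
    exact ⟨hx.1, hx.2.1⟩
  -- choose coordinatewise maximizers
  have hmaxex : ∀ i : Fin n, ∃ m ∈ S, ∀ x ∈ S, x i ≤ m i := by
    intro i
    obtain ⟨m, hmS, hmax⟩ :=
      hScompact.exists_isMaxOn ⟨0, h0S⟩ ((continuous_apply i).continuousOn)
    exact ⟨m, hmS, fun x hx => hmax hx⟩
  choose m hmS hmax using hmaxex
  -- sup of finitely many elements of S is in S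
  have key : ∀ s : Finset (Fin n), ∃ z ∈ S, ∀ i ∈ s, m i ≤ z := by
    intro s
    induction s using Finset.induction_on with
    | empty => exact ⟨0, h0S, by simp⟩
    | insert _ _ _ ih =>
      obtain ⟨z, hzS, hz⟩ := ih
      rename_i a s' _
      refine ⟨m a ⊔ z, hsup _ (hmS a) _ hzS, ?_⟩
      intro i hi
      rcases Finset.mem_insert.1 hi with h | h
      · exact h ▸ le_sup_left
      · exact (hz i h).trans le_sup_right
  obtain ⟨z, hzS, hz⟩ := key Finset.univ
  refine ⟨z, ⟨hzS.1, hzS.2.1, hzS.2.2⟩, ?_⟩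
  intro x hx0 hxb hxf i
  exact (hmax i x ⟨hx0, hxb, hxf⟩).trans (hz i (Finset.mem_univ i) i)
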